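/- Define J₀(z) = ∑_{k=0}^∞ (−1)^k z^{2k} / (4^k (k!)²). Then for every λ ∈ ℝ, the function u(y,t) := J₀(√(y² + 2λ y e^t)) (interpreted via the entire even power series, i.e. u(y,t) = ∑_{k≥0} (−1)^k (y² + 2λ y e^t)^k / (4^k (k!)²)) satisfies u_tt = y²u_yy + y u_y + y²u for all y > 0 and t ∈ ℝ. -/

import Mathlib

/-- `J₀(√(y² + 2λ y e^t))` interpreted via the entire even power series. -/
noncomputable def besselSol (l : ℝ) (p : ℝ × ℝ) : ℝ :=
  ∑' k : ℕ, (-1) ^ k * (p.1 ^ 2 + 2 * l * p.1 * Real.exp p.2) ^ k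
    / (4 ^ k * ((Nat.factorial k : ℝ)) ^ 2)

/-- First partial derivative in the first coordinate. -/
noncomputable def pdx1 (u : ℝ × ℝ → ℝ) (p : ℝ × ℝ) : ℝ :=
  deriv (fun x => u (x, p.2)) p.1

/-- Second partial derivative in the first coordinate. -/
noncomputable def pdx2 (u : ℝ × ℝ → ℝ) (p : ℝ × ℝ) : ℝ :=
  deriv (fun x => deriv (fun x' => u (x', p.2)) x) p.1

/-- Second partial derivative in the second coordinate. -/
noncomputable def pdt2 (u : ℝ × ℝ → ℝ) (p : ℝ × ℝ) : ℝ :=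
  deriv (fun t => deriv (fun t' => u (p.1, t')) t) p.2

noncomputable def aco (k : ℕ) : ℝ := (-1) ^ k / (4 ^ k * ((Nat.factorial k : ℝ)) ^ 2)

noncomputable def J (w : ℝ) : ℝ := ∑' k : ℕ, aco k * w ^ k
noncomputable def J1 (w : ℝ) : ℝ := ∑' k : ℕ, ((k : ℝ) + 1) * aco (k + 1) * w ^ k
noncomputable def J2 (w : ℝ) : ℝ :=
  ∑' k : ℕ, ((k : ℝ) + 2) * ((k : ℝ) + 1) * aco (k + 2) * w ^ k

lemma habs : ∀ k : ℕ, |aco k| ≤ 1 / (Nat.factorial k : ℝ) := by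
  intro k
  have hf : (0:ℝ) < (Nat.factorial k : ℝ) := by positivity
  unfold aco
  rw [abs_div, abs_pow, abs_neg, abs_one, one_pow, abs_of_pos (by positivity)]
  rw [div_le_div_iff₀ (by positivity) hf]
  have h4 : (1:ℝ) ≤ 4 ^ k := one_le_pow₀ (by norm_num)
  have hf1 : (1:ℝ) ≤ (Nat.factorial k : ℝ) := by exact_mod_cast Nat.one_le_iff_ne_zero.mpr k.factorial_ne_zero
  nlinarith

lemma hc_succ (c : ℕ → ℝ) (hc : ∀ k, |c k| ≤ 1 / (Nat.factorial k : ℝ)) :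
    ∀ k : ℕ, |((k : ℝ) + 1) * c (k + 1)| ≤ 1 / (Nat.factorial k : ℝ) := by
  intro k
  rw [abs_mul, abs_of_nonneg (by positivity : (0:ℝ) ≤ (k:ℝ) + 1)]
  calc ((k:ℝ) + 1) * |c (k + 1)| ≤ ((k:ℝ) + 1) * (1 / (Nat.factorial (k+1) : ℝ)) := by
        gcongr; exact hc (k+1)
    _ = 1 / (Nat.factorial k : ℝ) := by
        rw [Nat.factorial_succ]
        have hf : (0:ℝ) < (Nat.factorial k : ℝ) := by positivity
        push_cast
        field_simp

lemma summable_aux (c : ℕ → ℝ) (hc : ∀ k, |c k| ≤ 1 / (Nat.factorial k : ℝ)) (w : ℝ) :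
    Summable (fun k : ℕ => c k * w ^ k) := by
  apply Summable.of_norm_bounded (Real.summable_pow_div_factorial |w|)
  intro k
  rw [Real.norm_eq_abs, abs_mul, abs_pow]
  calc |c k| * |w| ^ k ≤ (1 / (Nat.factorial k : ℝ)) * |w| ^ k := by gcongr; exact hc k
    _ = |w| ^ k / (Nat.factorial k : ℝ) := by ring

lemma summable_u (R : ℝ) (hR : 0 ≤ R) :
    Summable (fun k : ℕ => ((k : ℝ) + 1) * R ^ k / (Nat.factorial k : ℝ)) := by
  apply Summable.of_nonneg_of_le (fun k => by positivity) _
    (Real.summable_pow_div_factorial (2 * R))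
  intro k
  rw [mul_pow]
  have h1 : ((k:ℝ) + 1) ≤ 2 ^ k := by exact_mod_cast Nat.lt_two_pow_self (n := k)
  gcongr

lemma hasDerivAt_ser (c : ℕ → ℝ) (hc : ∀ k, |c k| ≤ 1 / (Nat.factorial k : ℝ)) (w : ℝ) :
    HasDerivAt (fun x => ∑' k : ℕ, c k * x ^ k)
      (∑' k : ℕ, ((k : ℝ) + 1) * c (k + 1) * w ^ k) w := by
  set R : ℝ := |w| + 1 with hRdef
  have hR1 : (1:ℝ) ≤ R := by have := abs_nonneg w; linarith
  have hR0 : (0:ℝ) ≤ R := by linarith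
  have hmem : w ∈ Metric.ball (0:ℝ) R := by
    simp [hRdef, Real.dist_eq]
  have key : HasDerivAt (fun x => ∑' k : ℕ, c k * x ^ k)
      (∑' k : ℕ, c k * ((k : ℝ) * w ^ (k - 1))) w := by
    apply hasDerivAt_tsum_of_isPreconnected (summable_u R hR0) Metric.isOpen_ball
      ((convex_ball (0:ℝ) R).isPreconnected)
      (fun k y _ => (hasDerivAt_pow k y).const_mul (c k))
      _ (Metric.mem_ball_self (by linarith)) (summable_aux c hc 0) hmem
    intro k y hy
    have hyR : |y| ≤ R := le_of_lt (by simpa [Real.dist_eq] using hy)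
    rw [Real.norm_eq_abs, abs_mul, abs_mul, abs_pow, Nat.abs_cast]
    calc |c k| * ((k:ℝ) * |y| ^ (k-1))
        ≤ (1 / (Nat.factorial k : ℝ)) * (((k:ℝ)+1) * R ^ k) := by
          apply mul_le_mul (hc k) _ (by positivity) (by positivity)
          apply mul_le_mul (by linarith) _ (by positivity) (by positivity)
          calc |y| ^ (k-1) ≤ R ^ (k-1) := by gcongr
            _ ≤ R ^ k := pow_le_pow_right₀ hR1 (Nat.sub_le k 1)
      _ = ((k:ℝ)+1) * R ^ k / (Nat.factorial k : ℝ) := by ring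
  convert key using 1
  have hs1 : Summable (fun k : ℕ => ((k:ℝ)+1) * c (k+1) * w ^ k) :=
    summable_aux _ (hc_succ c hc) w
  have hsh : Summable (fun k : ℕ => c (k+1) * (((k+1:ℕ):ℝ) * w ^ (k+1-1))) := by
    apply hs1.congr
    intro k
    simp only [Nat.add_sub_cancel]
    push_cast
    ring
  have hss : Summable (fun k : ℕ => c k * ((k:ℝ) * w ^ (k-1))) :=
    (_root_.summable_nat_add_iff 1).mp hsh
  rw [Summable.tsum_eq_zero_add hss]
  simp only [Nat.cast_zero, zero_mul, mul_zero, zero_add, Nat.zero_sub, pow_zero]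
  apply tsum_congr
  intro k
  simp only [Nat.add_sub_cancel]
  push_cast
  ring

lemma hJderiv (w : ℝ) : HasDerivAt J (J1 w) w := hasDerivAt_ser aco habs w

lemma hJ1deriv (w : ℝ) : HasDerivAt J1 (J2 w) w := by
  have h := hasDerivAt_ser (fun k => ((k:ℝ)+1) * aco (k+1)) (hc_succ aco habs) w
  have e : (∑' k : ℕ, ((k:ℝ)+1) * (((k+1:ℕ):ℝ)+1) * aco (k+1+1) * w ^ k) = J2 w := by
    apply tsum_congr; intro k; push_cast; ring
  unfold J1
  convert h using 1
  rw [← e]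
  apply tsum_congr; intro k; push_cast; ring

lemma hcJ2 : ∀ k : ℕ, |((k:ℝ)+2) * ((k:ℝ)+1) * aco (k+2)| ≤ 1 / (Nat.factorial k : ℝ) := by
  intro k
  have h := hc_succ (fun j => ((j:ℝ)+1) * aco (j+1)) (hc_succ aco habs) k
  have e : ((k:ℝ)+1) * ((((k+1:ℕ)):ℝ)+1) * aco (k+1+1) = ((k:ℝ)+2) * ((k:ℝ)+1) * aco (k+2) := by
    push_cast; ring
  rw [show ((k:ℝ)+1) * ((((k+1:ℕ)):ℝ)+1) * aco (k+1+1)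
      = ((k:ℝ)+1) * (((((k+1:ℕ)):ℝ)+1) * aco (k+1+1)) from by ring] at e
  rw [e] at h
  exact h

lemma aco_rec (k : ℕ) : 4 * ((k:ℝ)+1)^2 * aco (k+1) + aco k = 0 := by
  unfold aco
  rw [Nat.factorial_succ, pow_succ (4:ℝ), pow_succ (-1:ℝ)]
  have hf : ((Nat.factorial k : ℝ)) ≠ 0 := by positivity
  have hk1 : ((k:ℝ)+1) ≠ 0 := by positivity
  have h4 : ((4:ℝ)^k) ≠ 0 := by positivity
  push_cast
  field_simp
  ring

lemma bessel_ode (w : ℝ) : 4 * w * J2 w + 4 * J1 w + J w = 0 := by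
  have sJ : Summable (fun k : ℕ => aco k * w ^ k) := summable_aux aco habs w
  have sJ1 : Summable (fun k : ℕ => ((k:ℝ)+1) * aco (k+1) * w ^ k) :=
    summable_aux _ (hc_succ aco habs) w
  have sJ2 : Summable (fun k : ℕ => ((k:ℝ)+2) * ((k:ℝ)+1) * aco (k+2) * w ^ k) :=
    summable_aux _ hcJ2 w
  have e1 : ∀ k : ℕ, 4 * (((k+1:ℕ):ℝ)+1) * ((k+1:ℕ):ℝ) * aco (k+1+1) * w ^ (k+1)
      = (4*w) * (((k:ℝ)+2) * ((k:ℝ)+1) * aco (k+2) * w ^ k) := by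
    intro k; push_cast; ring
  have hshift : Summable (fun k : ℕ => 4 * (((k+1:ℕ):ℝ)+1) * ((k+1:ℕ):ℝ) * aco (k+1+1) * w ^ (k+1)) := by
    simp only [e1]
    exact sJ2.mul_left (4*w)
  have hF : Summable (fun k : ℕ => 4 * ((k:ℝ)+1) * (k:ℝ) * aco (k+1) * w ^ k) :=
    (_root_.summable_nat_add_iff 1).mp hshift
  have h2 : 4 * w * J2 w = ∑' k : ℕ, 4 * ((k:ℝ)+1) * (k:ℝ) * aco (k+1) * w ^ k := by
    rw [Summable.tsum_eq_zero_add hF]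
    simp only [e1]
    rw [tsum_mul_left]
    unfold J2
    norm_num
  have h1 : 4 * J1 w = ∑' k : ℕ, 4 * (((k:ℝ)+1) * aco (k+1) * w ^ k) := by
    unfold J1; rw [tsum_mul_left]
  rw [h2, h1]
  unfold J
  rw [← Summable.tsum_add hF (sJ1.mul_left 4), ← Summable.tsum_add (hF.add (sJ1.mul_left 4)) sJ]
  calc (∑' k : ℕ, (4 * ((k:ℝ)+1) * (k:ℝ) * aco (k+1) * w ^ k
          + 4 * (((k:ℝ)+1) * aco (k+1) * w ^ k) + aco k * w ^ k))
      = ∑' _ : ℕ, (0:ℝ) := by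
        apply tsum_congr
        intro k
        have := aco_rec k
        linear_combination (w ^ k) * this
    _ = 0 := tsum_zero

lemma besselSol_eq (l : ℝ) (p : ℝ × ℝ) :
    besselSol l p = J (p.1 ^ 2 + 2 * l * p.1 * Real.exp p.2) := by
  unfold besselSol J aco
  apply tsum_congr; intro k; ring

theorem symmetry_solution_solves_pde (l : ℝ) :
    ∀ y t : ℝ, 0 < y →
      pdt2 (besselSol l) (y, t)
        = y ^ 2 * pdx2 (besselSol l) (y, t) + y * pdx1 (besselSol l) (y, t)
          + y ^ 2 * besselSol l (y, t) := by
  intro y t _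
  have hq : ∀ x : ℝ, HasDerivAt (fun x : ℝ => x ^ 2 + 2 * l * x * Real.exp t)
      (2 * x + 2 * l * Real.exp t) x := by
    intro x
    have h1 : HasDerivAt (fun x : ℝ => x ^ 2 + 2 * l * Real.exp t * x)
        (2 * x ^ 1 + 2 * l * Real.exp t * 1) x :=
      (hasDerivAt_pow 2 x).add ((hasDerivAt_id x).const_mul (2 * l * Real.exp t))
    have e : (fun x : ℝ => x ^ 2 + 2 * l * x * Real.exp t)
        = fun x : ℝ => x ^ 2 + 2 * l * Real.exp t * x := by funext x; ring
    rw [e]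
    convert h1 using 1; ring
  have hr : ∀ s : ℝ, HasDerivAt (fun s : ℝ => y ^ 2 + 2 * l * y * Real.exp s)
      (2 * l * y * Real.exp s) s := by
    intro s
    have := ((Real.hasDerivAt_exp s).const_mul (2 * l * y)).const_add (y ^ 2)
    convert this using 1
  set w : ℝ := y ^ 2 + 2 * l * y * Real.exp t with hw
  -- inner x-derivative
  have dx1 : ∀ x : ℝ, deriv (fun x' : ℝ => besselSol l (x', t)) x
      = J1 (x ^ 2 + 2 * l * x * Real.exp t) * (2 * x + 2 * l * Real.exp t) := by
    intro x
    have e : (fun x' : ℝ => besselSol l (x', t))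
        = fun x' : ℝ => J (x' ^ 2 + 2 * l * x' * Real.exp t) := by
      funext x'; exact besselSol_eq l (x', t)
    rw [e]
    exact ((hJderiv _).comp x (hq x)).deriv
  have dt1 : ∀ s : ℝ, deriv (fun s' : ℝ => besselSol l (y, s')) s
      = J1 (y ^ 2 + 2 * l * y * Real.exp s) * (2 * l * y * Real.exp s) := by
    intro s
    have e : (fun s' : ℝ => besselSol l (y, s'))
        = fun s' : ℝ => J (y ^ 2 + 2 * l * y * Real.exp s') := by
      funext s'; exact besselSol_eq l (y, s')
    rw [e]
    exact ((hJderiv _).comp s (hr s)).deriv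
  have hx1 : pdx1 (besselSol l) (y, t) = J1 w * (2 * y + 2 * l * Real.exp t) := by
    simp only [pdx1]
    exact dx1 y
  have hx2 : pdx2 (besselSol l) (y, t)
      = J2 w * (2 * y + 2 * l * Real.exp t) * (2 * y + 2 * l * Real.exp t) + J1 w * 2 := by
    simp only [pdx2]
    have e : (fun x : ℝ => deriv (fun x' : ℝ => besselSol l (x', t)) x)
        = fun x : ℝ => J1 (x ^ 2 + 2 * l * x * Real.exp t) * (2 * x + 2 * l * Real.exp t) := by
      funext x; exact dx1 x
    rw [e]
    have hlin : HasDerivAt (fun x : ℝ => 2 * x + 2 * l * Real.exp t) 2 y := by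
      have := ((hasDerivAt_id y).const_mul (2:ℝ)).add_const (2 * l * Real.exp t)
      simpa using this
    have hprod := (((hJ1deriv w).comp y (hq y)).mul hlin)
    simp only [Function.comp_def, Function.comp_apply, Pi.mul_def] at hprod
    rw [hprod.deriv, ← hw]
  have ht2 : pdt2 (besselSol l) (y, t)
      = J2 w * (2 * l * y * Real.exp t) * (2 * l * y * Real.exp t)
        + J1 w * (2 * l * y * Real.exp t) := by
    simp only [pdt2]
    have e : (fun s : ℝ => deriv (fun s' : ℝ => besselSol l (y, s')) s)
        = fun s : ℝ => J1 (y ^ 2 + 2 * l * y * Real.exp s) * (2 * l * y * Real.exp s) := by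
      funext s; exact dt1 s
    rw [e]
    have hexp : HasDerivAt (fun s : ℝ => 2 * l * y * Real.exp s) (2 * l * y * Real.exp t) t :=
      (Real.hasDerivAt_exp t).const_mul (2 * l * y)
    have hprod := (((hJ1deriv w).comp t (hr t)).mul hexp)
    simp only [Function.comp_def, Function.comp_apply, Pi.mul_def] at hprod
    rw [hprod.deriv, ← hw]
  rw [hx1, hx2, ht2, besselSol_eq l (y, t)]
  simp only
  have hode := bessel_ode w
  rw [hw] at hode ⊢
  linear_combination (-(y ^ 2)) * hode
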